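/- For a mixture of two one-dimensional Gaussians with overall mean zero and parameters α = −μ₁μ₂, β = μ₁+μ₂, γ = (σ₂²−σ₁²)/(μ₂−μ₁), the excess sixth moment satisfies X₆ := M₆ − 15M₄M₂ + 30M₂³ = α(16α² − 12αβ² − 60αβγ + β⁴ + 15β³γ + 45β²γ² + 15βγ³). -/

import Mathlib

open MeasureTheory ProbabilityTheory Real Filter Finset
open scoped NNReal ENNReal

noncomputable def Jg (b : ℝ) (n : ℕ) : ℝ := ∫ x : ℝ, x ^ n * Real.exp (-b * x ^ 2)

lemma integrable_pow_mul_gauss {b : ℝ} (hb : 0 < b) (n : ℕ) :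
    Integrable fun x : ℝ => x ^ n * Real.exp (-b * x ^ 2) := by
  have hs : (-1 : ℝ) < (n : ℝ) := lt_of_lt_of_le neg_one_lt_zero (Nat.cast_nonneg n)
  simpa [Real.rpow_natCast] using integrable_rpow_mul_exp_neg_mul_sq hb hs

lemma Jg_rec {b : ℝ} (hb : 0 < b) (n : ℕ) :
    Jg b (n + 2) = ((n : ℝ) + 1) / (2 * b) * Jg b n := by
  have hu : ∀ x : ℝ, HasDerivAt (fun x : ℝ => x ^ (n + 1)) (((n : ℝ) + 1) * x ^ n) x := by
    intro x
    simpa using hasDerivAt_pow (n + 1) x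
  have hv : ∀ x : ℝ, HasDerivAt (fun x : ℝ => Real.exp (-b * x ^ 2))
      ((-2 * b * x) * Real.exp (-b * x ^ 2)) x := by
    intro x
    have h1 : HasDerivAt (fun x : ℝ => -b * x ^ 2) (-b * (2 * x)) x := by
      simpa using ((hasDerivAt_pow 2 x).const_mul (-b))
    have := h1.exp
    convert this using 1
    ring
  have huv' : Integrable ((fun x : ℝ => x ^ (n + 1)) *
      fun x : ℝ => (-2 * b * x) * Real.exp (-b * x ^ 2)) := by
    have : ((fun x : ℝ => x ^ (n + 1)) * fun x : ℝ => (-2 * b * x) * Real.exp (-b * x ^ 2))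
        = fun x : ℝ => (-2 * b) * (x ^ (n + 2) * Real.exp (-b * x ^ 2)) := by
      funext x; simp [Pi.mul_apply]; ring
    rw [this]
    exact (integrable_pow_mul_gauss hb (n + 2)).const_mul _
  have hu'v : Integrable ((fun x : ℝ => ((n : ℝ) + 1) * x ^ n) *
      fun x : ℝ => Real.exp (-b * x ^ 2)) := by
    have : ((fun x : ℝ => ((n : ℝ) + 1) * x ^ n) * fun x : ℝ => Real.exp (-b * x ^ 2))
        = fun x : ℝ => ((n : ℝ) + 1) * (x ^ n * Real.exp (-b * x ^ 2)) := by
      funext x; simp [Pi.mul_apply]; ring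
    rw [this]
    exact (integrable_pow_mul_gauss hb n).const_mul _
  have huv : Integrable ((fun x : ℝ => x ^ (n + 1)) * fun x : ℝ => Real.exp (-b * x ^ 2)) := by
    have : ((fun x : ℝ => x ^ (n + 1)) * fun x : ℝ => Real.exp (-b * x ^ 2))
        = fun x : ℝ => x ^ (n + 1) * Real.exp (-b * x ^ 2) := rfl
    rw [this]
    exact integrable_pow_mul_gauss hb (n + 1)
  have h := integral_mul_deriv_eq_deriv_mul_of_integrable (fun x _ => hu x) (fun x _ => hv x) huv' hu'v huv
  have hL : (∫ x : ℝ, x ^ (n + 1) * ((-2 * b * x) * Real.exp (-b * x ^ 2)))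
      = (-2 * b) * Jg b (n + 2) := by
    rw [show (fun x : ℝ => x ^ (n + 1) * ((-2 * b * x) * Real.exp (-b * x ^ 2)))
        = fun x : ℝ => (-2 * b) * (x ^ (n + 2) * Real.exp (-b * x ^ 2)) by
      funext x; ring]
    exact integral_const_mul _ _
  have hR : (∫ x : ℝ, ((n : ℝ) + 1) * x ^ n * Real.exp (-b * x ^ 2))
      = ((n : ℝ) + 1) * Jg b n := by
    rw [show (fun x : ℝ => ((n : ℝ) + 1) * x ^ n * Real.exp (-b * x ^ 2))
        = fun x : ℝ => ((n : ℝ) + 1) * (x ^ n * Real.exp (-b * x ^ 2)) by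
      funext x; ring]
    exact integral_const_mul _ _
  rw [hL, hR] at h
  have hb' : (2 : ℝ) * b ≠ 0 := by positivity
  field_simp
  linarith [h]

lemma Jg_odd (b : ℝ) (m : ℕ) : Jg b (2 * m + 1) = 0 := by
  have h := integral_neg_eq_self
    (fun x : ℝ => x ^ (2 * m + 1) * Real.exp (-b * x ^ 2)) (volume : Measure ℝ)
  have heq : (fun x : ℝ => (-x) ^ (2 * m + 1) * Real.exp (-b * (-x) ^ 2))
      = fun x : ℝ => -(x ^ (2 * m + 1) * Real.exp (-b * x ^ 2)) := by
    funext x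
    rw [Odd.neg_pow ⟨m, by ring⟩, neg_sq]
    ring
  rw [heq, integral_neg] at h
  have : Jg b (2 * m + 1) = ∫ x : ℝ, x ^ (2 * m + 1) * Real.exp (-b * x ^ 2) := rfl
  rw [this]
  linarith [h]

lemma Jg_addpow {b : ℝ} (hb : 0 < b) (μ : ℝ) (k : ℕ) :
    (∫ x : ℝ, (x + μ) ^ k * Real.exp (-b * x ^ 2))
      = ∑ j ∈ Finset.range (k + 1), (μ ^ (k - j) * (k.choose j : ℝ)) * Jg b j := by
  have h1 : ∀ x : ℝ, (x + μ) ^ k * Real.exp (-b * x ^ 2)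
      = ∑ j ∈ Finset.range (k + 1),
        (μ ^ (k - j) * (k.choose j : ℝ)) * (x ^ j * Real.exp (-b * x ^ 2)) := by
    intro x
    rw [add_pow, Finset.sum_mul]
    refine Finset.sum_congr rfl fun j _ => by ring
  simp_rw [h1]
  rw [integral_finset_sum _ (fun j _ => (integrable_pow_mul_gauss hb j).const_mul _)]
  exact Finset.sum_congr rfl fun j _ => integral_const_mul _ _

lemma gaussianReal_integral_eq (μ : ℝ) {v : ℝ≥0} (hv : v ≠ 0) (g : ℝ → ℝ) :
    (∫ x, g x ∂(gaussianReal μ v)) = ∫ x, gaussianPDFReal μ v x * g x := by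
  rw [gaussianReal_of_var_ne_zero _ hv]
  have hd : gaussianPDF μ v = fun x => ((gaussianPDFReal μ v x).toNNReal : ℝ≥0∞) := by
    funext x; rfl
  rw [hd, integral_withDensity_eq_integral_smul
    ((measurable_gaussianPDFReal μ v).real_toNNReal) g]
  refine integral_congr_ae (ae_of_all _ fun x => ?_)
  simp [NNReal.smul_def, Real.coe_toNNReal _ (gaussianPDFReal_nonneg μ v x)]

lemma gaussianReal_pow_eq_sum (μ : ℝ) {v : ℝ≥0} (hv : v ≠ 0) (k : ℕ) :
    (∫ x, x ^ k ∂(gaussianReal μ v))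
      = (Real.sqrt (2 * π * v))⁻¹ * ∑ j ∈ Finset.range (k + 1),
          (μ ^ (k - j) * (k.choose j : ℝ)) * Jg (2 * (v : ℝ))⁻¹ j := by
  have hv0 : 0 < (v : ℝ) := by
    exact_mod_cast pos_iff_ne_zero.mpr hv
  have hb : 0 < (2 * (v : ℝ))⁻¹ := by positivity
  rw [gaussianReal_integral_eq μ hv (fun x => x ^ k)]
  have := MeasureTheory.integral_add_right_eq_self
    (μ := (volume : Measure ℝ)) (fun x => gaussianPDFReal μ v x * x ^ k) μ
  rw [← this]
  have heq : ∀ x : ℝ, gaussianPDFReal μ v (x + μ) * (x + μ) ^ k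
      = (Real.sqrt (2 * π * v))⁻¹ *
        ((x + μ) ^ k * Real.exp (-(2 * (v : ℝ))⁻¹ * x ^ 2)) := by
    intro x
    rw [gaussianPDFReal]
    have : -(x + μ - μ) ^ 2 / (2 * (v : ℝ)) = -(2 * (v : ℝ))⁻¹ * x ^ 2 := by
      field_simp
      ring
    rw [this]
    ring
  simp_rw [heq]
  rw [integral_const_mul, Jg_addpow hb μ k]

lemma gauss_CJ0 {v : ℝ≥0} (hv : v ≠ 0) :
    (Real.sqrt (2 * π * v))⁻¹ * Jg (2 * (v : ℝ))⁻¹ 0 = 1 := by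
  have h := integral_gaussianPDFReal_eq_one 0 hv
  have heq : ∀ x : ℝ, gaussianPDFReal 0 v x
      = (Real.sqrt (2 * π * v))⁻¹ * (x ^ 0 * Real.exp (-(2 * (v : ℝ))⁻¹ * x ^ 2)) := by
    intro x
    rw [gaussianPDFReal]
    have hv0 : 0 < (v : ℝ) := by exact_mod_cast pos_iff_ne_zero.mpr hv
    have : -(x - 0) ^ 2 / (2 * (v : ℝ)) = -(2 * (v : ℝ))⁻¹ * x ^ 2 := by
      field_simp
      ring
    rw [this]
    ring
  rw [show (fun x => gaussianPDFReal 0 v x) = fun x : ℝ =>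
      (Real.sqrt (2 * π * v))⁻¹ * (x ^ 0 * Real.exp (-(2 * (v : ℝ))⁻¹ * x ^ 2)) from
    funext heq, integral_const_mul] at h
  exact h

lemma gauss_m2 (μ : ℝ) (v : ℝ≥0) :
    (∫ x, x ^ 2 ∂(gaussianReal μ v)) = μ ^ 2 + (v : ℝ) := by
  by_cases hv : v = 0
  · subst hv; simp
  have hv0 : 0 < (v : ℝ) := by exact_mod_cast pos_iff_ne_zero.mpr hv
  have hb : 0 < (2 * (v : ℝ))⁻¹ := by positivity
  set b := (2 * (v : ℝ))⁻¹ with hbdef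
  have h2b : (2 * b)⁻¹ = (v : ℝ) := by
    rw [hbdef]; field_simp
  have hJ1 : Jg b 1 = 0 := by simpa using Jg_odd b 0
  have hJ2 : Jg b 2 = (v : ℝ) * Jg b 0 := by
    have := Jg_rec hb 0
    rw [show ((0 : ℕ) : ℝ) + 1 = 1 by norm_num] at this
    rw [this, one_div, h2b]
  have hCJ0 := gauss_CJ0 hv
  rw [gaussianReal_pow_eq_sum μ hv 2]
  rw [← hbdef] at hCJ0 ⊢
  simp only [Finset.sum_range_succ, Finset.range_zero, Finset.sum_empty, zero_add]
  norm_num [hJ1, hJ2] at hCJ0 ⊢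
  linear_combination (μ ^ 2 + (v : ℝ)) * hCJ0

lemma gauss_m4 (μ : ℝ) (v : ℝ≥0) :
    (∫ x, x ^ 4 ∂(gaussianReal μ v))
      = μ ^ 4 + 6 * μ ^ 2 * (v : ℝ) + 3 * (v : ℝ) ^ 2 := by
  by_cases hv : v = 0
  · subst hv; simp
  have hv0 : 0 < (v : ℝ) := by exact_mod_cast pos_iff_ne_zero.mpr hv
  have hb : 0 < (2 * (v : ℝ))⁻¹ := by positivity
  set b := (2 * (v : ℝ))⁻¹ with hbdef
  have h2b : (2 * b)⁻¹ = (v : ℝ) := by rw [hbdef]; field_simp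
  have hJ1 : Jg b 1 = 0 := by simpa using Jg_odd b 0
  have hJ3 : Jg b 3 = 0 := by simpa using Jg_odd b 1
  have hJ2 : Jg b 2 = (v : ℝ) * Jg b 0 := by
    have := Jg_rec hb 0
    rw [show ((0 : ℕ) : ℝ) + 1 = 1 by norm_num] at this
    rw [this, one_div, h2b]
  have hJ4 : Jg b 4 = 3 * (v : ℝ) ^ 2 * Jg b 0 := by
    have := Jg_rec hb 2
    rw [show ((2 : ℕ) : ℝ) + 1 = 3 by norm_num] at this
    rw [this, hJ2, div_eq_mul_inv, h2b]
    ring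
  have hCJ0 := gauss_CJ0 hv
  rw [gaussianReal_pow_eq_sum μ hv 4]
  rw [← hbdef] at hCJ0 ⊢
  simp only [Finset.sum_range_succ, Finset.range_zero, Finset.sum_empty, zero_add]
  norm_num [hJ1, hJ2, hJ3, hJ4, show Nat.choose 4 2 = 6 from rfl] at hCJ0 ⊢
  linear_combination (μ ^ 4 + 6 * μ ^ 2 * (v : ℝ) + 3 * (v : ℝ) ^ 2) * hCJ0

lemma gauss_m6 (μ : ℝ) (v : ℝ≥0) :
    (∫ x, x ^ 6 ∂(gaussianReal μ v))
      = μ ^ 6 + 15 * μ ^ 4 * (v : ℝ) + 45 * μ ^ 2 * (v : ℝ) ^ 2 + 15 * (v : ℝ) ^ 3 := by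
  by_cases hv : v = 0
  · subst hv; simp
  have hv0 : 0 < (v : ℝ) := by exact_mod_cast pos_iff_ne_zero.mpr hv
  have hb : 0 < (2 * (v : ℝ))⁻¹ := by positivity
  set b := (2 * (v : ℝ))⁻¹ with hbdef
  have h2b : (2 * b)⁻¹ = (v : ℝ) := by rw [hbdef]; field_simp
  have hJ1 : Jg b 1 = 0 := by simpa using Jg_odd b 0
  have hJ3 : Jg b 3 = 0 := by simpa using Jg_odd b 1
  have hJ5 : Jg b 5 = 0 := by simpa using Jg_odd b 2
  have hJ2 : Jg b 2 = (v : ℝ) * Jg b 0 := by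
    have := Jg_rec hb 0
    rw [show ((0 : ℕ) : ℝ) + 1 = 1 by norm_num] at this
    rw [this, one_div, h2b]
  have hJ4 : Jg b 4 = 3 * (v : ℝ) ^ 2 * Jg b 0 := by
    have := Jg_rec hb 2
    rw [show ((2 : ℕ) : ℝ) + 1 = 3 by norm_num] at this
    rw [this, hJ2, div_eq_mul_inv, h2b]
    ring
  have hJ6 : Jg b 6 = 15 * (v : ℝ) ^ 3 * Jg b 0 := by
    have := Jg_rec hb 4
    rw [show ((4 : ℕ) : ℝ) + 1 = 5 by norm_num] at this
    rw [this, hJ4, div_eq_mul_inv, h2b]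
    ring
  have hCJ0 := gauss_CJ0 hv
  rw [gaussianReal_pow_eq_sum μ hv 6]
  rw [← hbdef] at hCJ0 ⊢
  simp only [Finset.sum_range_succ, Finset.range_zero, Finset.sum_empty, zero_add]
  norm_num [hJ1, hJ2, hJ3, hJ4, hJ5, hJ6, show Nat.choose 6 2 = 15 from rfl,
    show Nat.choose 6 3 = 20 from rfl, show Nat.choose 6 4 = 15 from rfl] at hCJ0 ⊢
  linear_combination (μ ^ 6 + 15 * μ ^ 4 * (v : ℝ) + 45 * μ ^ 2 * (v : ℝ) ^ 2
    + 15 * (v : ℝ) ^ 3) * hCJ0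

/-- Excess sixth moment of a zero-mean mixture of two Gaussians:
`X₆ := M₆ − 15M₄M₂ + 30M₂³
     = α(16α² − 12αβ² − 60αβγ + β⁴ + 15β³γ + 45β²γ² + 15βγ³)`. -/
theorem mixture_excess_sixth_moment (p₁ p₂ μ₁ μ₂ : ℝ) (v₁ v₂ : NNReal)
    (hp₁ : 0 < p₁) (hp₂ : 0 < p₂) (hsum : p₁ + p₂ = 1)
    (hmean : p₁ * μ₁ + p₂ * μ₂ = 0) (hne : μ₁ ≠ μ₂)
    (α β γ : ℝ) (hα : α = -(μ₁ * μ₂)) (hβ : β = μ₁ + μ₂)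
    (hγ : γ = ((v₂ : ℝ) - (v₁ : ℝ)) / (μ₂ - μ₁))
    (M₂ M₄ M₆ : ℝ)
    (hM₂ : M₂ = p₁ * ∫ x, x ^ 2 ∂(gaussianReal μ₁ v₁)
        + p₂ * ∫ x, x ^ 2 ∂(gaussianReal μ₂ v₂))
    (hM₄ : M₄ = p₁ * ∫ x, x ^ 4 ∂(gaussianReal μ₁ v₁)
        + p₂ * ∫ x, x ^ 4 ∂(gaussianReal μ₂ v₂))
    (hM₆ : M₆ = p₁ * ∫ x, x ^ 6 ∂(gaussianReal μ₁ v₁)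
        + p₂ * ∫ x, x ^ 6 ∂(gaussianReal μ₂ v₂)) :
    M₆ - 15 * M₄ * M₂ + 30 * M₂ ^ 3
      = α * (16 * α ^ 2 - 12 * α * β ^ 2 - 60 * α * β * γ + β ^ 4
          + 15 * β ^ 3 * γ + 45 * β ^ 2 * γ ^ 2 + 15 * β * γ ^ 3) := by
  rw [gauss_m2, gauss_m2, gauss_m4, gauss_m4, gauss_m6, gauss_m6] at *
  have hd : μ₂ - μ₁ ≠ 0 := sub_ne_zero.mpr (Ne.symm hne)
  have hp2 : p₂ = 1 - p₁ := by linarith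
  subst hp2
  have hp1 : p₁ = μ₂ / (μ₂ - μ₁) := by
    field_simp
    linarith [hmean]
  subst hp1 hα hβ hγ hM₂ hM₄ hM₆
  field_simp
  ring
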